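/- Let G be a compact totally disconnected abelian p-compatible group acting transitively and continuously on a compact totally disconnected Hausdorff space S, with stabilizer of x₀ corresponding to the character subgroup 𝔾₀. Then the family {η_i}_{i ∈ 𝔾₀} is an orthonormal basis of the ℂ_p-Banach space C(S, ℂ_p). -/

import Mathlib

open Filter Topology Function

set_option maxHeartbeats 1000000

/-- A family `e` in a non-Archimedean normed space over `K` is an orthonormal basis if
every element is a convergent sum `Σ cᵢ • eᵢ` and for every such convergent sum the norm
equals `sup ‖cᵢ‖`. -/
def IsNAOrthonormalBasis (K : Type*) [NontriviallyNormedField K]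
    {ι X : Type*} [NormedAddCommGroup X] [NormedSpace K X] (e : ι → X) : Prop :=
  (∀ x : X, ∃ c : ι → K, HasSum (fun i => c i • e i) x) ∧
  (∀ (c : ι → K) (x : X), HasSum (fun i => c i • e i) x → ‖x‖ = ⨆ i, ‖c i‖)

private lemma bdd_helper {ι : Type*} {f h : ι → ℝ} (hfh : ∀ i, f i ≤ h i)
    (hh : Tendsto h cofinite (𝓝 0)) : BddAbove (Set.range f) := by
  obtain ⟨A, hA⟩ := hh.bddAbove_range_of_cofinite
  exact ⟨A, by rintro x ⟨i, rfl⟩; exact (hfh i).trans (hA ⟨i, rfl⟩)⟩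

theorem stmt_13 (K : Type*) [NontriviallyNormedField K] [IsUltrametricDist K]
    [CompleteSpace K]
    (G : Type*) [TopologicalSpace G] [CommGroup G] [IsTopologicalGroup G]
    [CompactSpace G] [T2Space G] [TotallyDisconnectedSpace G]
    (S : Type*) [TopologicalSpace S] [CompactSpace S] [T2Space S]
    [TotallyDisconnectedSpace S]
    [MulAction G S] (hact : Continuous fun q : G × S => q.1 • q.2)
    (x₀ : S) (htrans : ∀ x : S, ∃ a : G, x = a⁻¹ • x₀)
    (ι : Type*) (g : ι → G →* Kˣ)
    (hcont : ∀ i, Continuous fun a : G => ((g i a : Kˣ) : K))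
    (hGbasis : IsNAOrthonormalBasis K
      (fun i : ι => (⟨fun a : G => ((g i a : Kˣ) : K), hcont i⟩ : C(G, K))))
    (𝔾₀ : Set ι) (h𝔾₀ : 𝔾₀ = {i : ι | ∀ a : G, a • x₀ = x₀ → g i a = 1})
    (η : ι → C(S, K))
    (hη : ∀ i ∈ 𝔾₀, ∀ a : G, η i (a⁻¹ • x₀) = ((g i a : Kˣ) : K)) :
    IsNAOrthonormalBasis K (fun i : 𝔾₀ => η i) := by
  classical
  set gc : ι → C(G, K) := fun i => (⟨fun a : G => ((g i a : Kˣ) : K), hcont i⟩ : C(G, K))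
    with hgc
  -- the map m₀ : G → S, a ↦ a⁻¹ • x₀
  have hm₀ : Continuous fun a : G => a⁻¹ • x₀ :=
    hact.comp (continuous_inv.prodMk continuous_const)
  -- Φ : C(S,K) → C(G,K), the isometric embedding
  have Φnorm : ∀ f : C(S, K),
      ‖f.comp (⟨fun a : G => a⁻¹ • x₀, hm₀⟩ : C(G, S))‖ = ‖f‖ := by
    intro f
    apply le_antisymm
    · rw [ContinuousMap.norm_le _ (norm_nonneg f)]
      intro a; exact f.norm_coe_le_norm _
    · rw [ContinuousMap.norm_le _ (norm_nonneg _)]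
      intro x
      obtain ⟨a, rfl⟩ := htrans x
      exact (f.comp (⟨fun a : G => a⁻¹ • x₀, hm₀⟩ : C(G, S))).norm_coe_le_norm a
  let Φ : C(S, K) →ₗᵢ[K] C(G, K) :=
    { toFun := fun f => f.comp (⟨fun a : G => a⁻¹ • x₀, hm₀⟩ : C(G, S))
      map_add' := fun f₁ f₂ => by ext a; rfl
      map_smul' := fun r f => by ext a; rfl
      norm_map' := Φnorm }
  have hΦapply : ∀ (f : C(S, K)) (a : G), Φ f a = f (a⁻¹ • x₀) := fun _ _ => rfl
  have hΦinj : Function.Injective Φ := Φ.injective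
  -- characters have norm ≥ 1
  have hgc1 : ∀ i, gc i 1 = 1 := by intro i; simp [hgc]
  have norm_gc : ∀ i, (1 : ℝ) ≤ ‖gc i‖ := by
    intro i
    have := (gc i).norm_coe_le_norm 1
    rwa [hgc1 i, norm_one] at this
  -- η i has norm ≥ 1 for i ∈ 𝔾₀
  have norm_η : ∀ i (hi : i ∈ 𝔾₀), (1 : ℝ) ≤ ‖η i‖ := by
    intro i hi
    have h1 : η i ((1 : G)⁻¹ • x₀) = ((g i 1 : Kˣ) : K) := hη i hi 1
    have := (η i).norm_coe_le_norm ((1 : G)⁻¹ • x₀)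
    rw [h1] at this
    simpa using this
  -- Φ (η i) = gc i for i ∈ 𝔾₀
  have hΦη : ∀ i (hi : i ∈ 𝔾₀), Φ (η i) = gc i := by
    intro i hi
    ext a
    exact hη i hi a
  -- uniqueness of coefficients in expansions over the gc basis
  have huniq : ∀ (c d : ι → K) (φ : C(G, K)),
      HasSum (fun i => c i • gc i) φ → HasSum (fun i => d i • gc i) φ → c = d := by
    intro c d φ hc hd
    have h0 : HasSum (fun i => (c i - d i) • gc i) 0 := by
      simpa [sub_smul] using hc.sub hd
    have hnorm := hGbasis.2 (fun i => c i - d i) 0 h0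
    rw [norm_zero] at hnorm
    have hb : BddAbove (Set.range fun i => ‖c i - d i‖) := by
      refine bdd_helper (h := fun i => ‖(c i - d i) • gc i‖) (fun i => ?_) ?_
      · simp only [norm_smul]
        calc ‖c i - d i‖ = ‖c i - d i‖ * 1 := by ring
        _ ≤ ‖c i - d i‖ * ‖gc i‖ :=
            mul_le_mul_of_nonneg_left (norm_gc i) (norm_nonneg _)
      · simpa only [norm_zero] using h0.summable.tendsto_cofinite_zero.norm
    funext i
    have hle : ‖c i - d i‖ ≤ ⨆ j, ‖c j - d j‖ := le_ciSup hb i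
    rw [← hnorm] at hle
    have : ‖c i - d i‖ = 0 := le_antisymm hle (norm_nonneg _)
    have := norm_eq_zero.mp this
    exact sub_eq_zero.mp this
  constructor
  · -- spanning
    intro f
    obtain ⟨c, hc⟩ := hGbasis.1 (Φ f)
    -- translation by stabilizer elements
    have hzero : ∀ i, i ∉ 𝔾₀ → c i = 0 := by
      intro i hi
      rw [h𝔾₀] at hi
      simp only [Set.mem_setOf_eq, not_forall] at hi
      obtain ⟨s, hs1, hs2⟩ := hi
      -- the translation operator T
      let T : C(G, K) →ₗᵢ[K] C(G, K) :=
        { toFun := fun φ => φ.comp (⟨fun a => a * s, continuous_mul_right s⟩ : C(G, G))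
          map_add' := fun _ _ => by ext a; rfl
          map_smul' := fun _ _ => by ext a; rfl
          norm_map' := by
            intro φ
            apply le_antisymm
            · rw [ContinuousMap.norm_le _ (norm_nonneg φ)]
              intro a; exact φ.norm_coe_le_norm _
            · rw [ContinuousMap.norm_le _ (norm_nonneg _)]
              intro a
              have : φ a = (φ.comp (⟨fun a => a * s, continuous_mul_right s⟩ : C(G, G)))
                  (a * s⁻¹) := by
                simp [ContinuousMap.comp_apply]
              rw [this]
              exact ContinuousMap.norm_coe_le_norm _ _ }
      have hTgc : ∀ j, T (gc j) = ((g j s : Kˣ) : K) • gc j := by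
        intro j
        ext a
        show ((g j (a * s) : Kˣ) : K) = ((g j s : Kˣ) : K) * ((g j a : Kˣ) : K)
        rw [map_mul]
        push_cast
        ring
      have hTΦf : T (Φ f) = Φ f := by
        ext a
        show f ((a * s)⁻¹ • x₀) = f (a⁻¹ • x₀)
        have hx₀ : s⁻¹ • x₀ = x₀ := by
          conv_lhs => rw [← hs1]
          rw [← mul_smul, inv_mul_cancel, one_smul]
        rw [mul_inv, mul_smul, hx₀]
      have hT : HasSum (fun j => (c j * ((g j s : Kˣ) : K)) • gc j) (Φ f) := by
        have := hc.map T.toContinuousLinearMap T.continuous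
        simp only [Function.comp_def, LinearIsometry.coe_toContinuousLinearMap] at this
        rw [hTΦf] at this
        convert this using 2 with j
        · rfl
        rw [map_smul, hTgc j, smul_smul]
      have heq := huniq _ _ _ hT hc
      have heqi : c i * ((g i s : Kˣ) : K) = c i := congrFun heq i
      by_contra hci
      apply hs2
      have hval : ((g i s : Kˣ) : K) = 1 :=
        mul_left_cancel₀ hci (heqi.trans (mul_one (c i)).symm)
      exact Units.ext hval
    -- restrict the sum to 𝔾₀
    have hsupp : support (fun i => c i • gc i) ⊆ 𝔾₀ := by
      intro i hi
      by_contra h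
      exact hi (by simp [hzero i h])
    have hsub : HasSum ((fun i => c i • gc i) ∘ (Subtype.val : 𝔾₀ → ι)) (Φ f) :=
      (hasSum_subtype_iff_of_support_subset hsupp).2 hc
    -- partial sums on the S side are Cauchy
    set u : Finset 𝔾₀ → C(S, K) := fun t => ∑ i ∈ t, c i • η i with hu
    have hΦu : ∀ t, Φ (u t) = ∑ i ∈ t, c i.1 • gc i.1 := by
      intro t
      rw [hu, map_sum]
      refine Finset.sum_congr rfl fun i _ => ?_
      rw [map_smul, hΦη i.1 i.2]
    have h1 : CauchySeq (Φ ∘ u) := by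
      have : Φ ∘ u = fun t : Finset 𝔾₀ => ∑ i ∈ t, c i.1 • gc i.1 := funext hΦu
      rw [this]
      exact hsub.cauchySeq
    have hcauchy : CauchySeq u := by
      have h2 := Φ.isometry.isUniformInducing.cauchy_map_iff (F := Filter.map u atTop)
      rw [Filter.map_map] at h2
      exact h2.mp h1
    obtain ⟨y, hy⟩ := cauchySeq_tendsto_of_complete hcauchy
    have hySum : HasSum (fun i : 𝔾₀ => c i.1 • η i.1) y := hy
    -- y = f
    have hΦy : HasSum (fun i : 𝔾₀ => c i.1 • gc i.1) (Φ y) := by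
      have := hySum.map Φ.toContinuousLinearMap Φ.continuous
      simp only [Function.comp_def, LinearIsometry.coe_toContinuousLinearMap] at this
      convert this using 2 with i
      · rfl
      rw [map_smul, hΦη i.1 i.2]
    have : Φ y = Φ f := hΦy.unique hsub
    have hyf : y = f := hΦinj this
    exact ⟨fun i => c i.1, hyf ▸ hySum⟩
  · -- norm identity
    intro c x hx
    set c' : ι → K := fun i => if h : i ∈ 𝔾₀ then c ⟨i, h⟩ else 0 with hc'
    have hΦx : HasSum (fun i : 𝔾₀ => c i • gc i.1) (Φ x) := by
      have := hx.map Φ.toContinuousLinearMap Φ.continuous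
      simp only [Function.comp_def, LinearIsometry.coe_toContinuousLinearMap] at this
      convert this using 2 with i
      · rfl
      rw [map_smul, hΦη i.1 i.2]
    have hsupp : support (fun i => c' i • gc i) ⊆ 𝔾₀ := by
      intro i hi
      by_contra h
      exact hi (by simp [hc', dif_neg h])
    have hcomp : ((fun i => c' i • gc i) ∘ (Subtype.val : 𝔾₀ → ι))
        = fun i : 𝔾₀ => c i • gc i.1 := by
      funext i
      simp only [Function.comp_apply, hc', dif_pos i.2]
    have h1 : HasSum (fun i : ι => c' i • gc i) (Φ x) := by
      rw [← hasSum_subtype_iff_of_support_subset hsupp, hcomp]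
      exact hΦx
    have h2 := hGbasis.2 c' (Φ x) (by rw [hgc] at h1 ⊢; exact h1)
    have hxnorm : ‖x‖ = ‖Φ x‖ := (Φ.norm_map x).symm
    rw [hxnorm, h2]
    -- boundedness of coefficient norms
    have hb : BddAbove (Set.range fun j : 𝔾₀ => ‖c j‖) := by
      refine bdd_helper (h := fun j : 𝔾₀ => ‖c j • η j.1‖) (fun j => ?_) ?_
      · simp only [norm_smul]
        calc ‖c j‖ = ‖c j‖ * 1 := by ring
        _ ≤ ‖c j‖ * ‖η j.1‖ :=
            mul_le_mul_of_nonneg_left (norm_η j.1 j.2) (norm_nonneg _)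
      · simpa only [norm_zero] using hx.summable.tendsto_cofinite_zero.norm
    have hb' : BddAbove (Set.range fun i : ι => ‖c' i‖) := by
      obtain ⟨A, hA⟩ := hb
      refine ⟨max A 0, ?_⟩
      rintro x ⟨i, rfl⟩
      by_cases h : i ∈ 𝔾₀
      · simp only [hc', dif_pos h]
        exact le_max_of_le_left (hA ⟨⟨i, h⟩, rfl⟩)
      · simp [hc', dif_neg h]
    apply le_antisymm
    · refine Real.iSup_le (fun i => ?_) (Real.iSup_nonneg fun _ => norm_nonneg _)
      by_cases h : i ∈ 𝔾₀
      · simp only [hc', dif_pos h]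
        exact le_ciSup hb ⟨i, h⟩
      · simp only [hc', dif_neg h, norm_zero]
        exact Real.iSup_nonneg fun _ => norm_nonneg _
    · refine Real.iSup_le (fun j => ?_) (Real.iSup_nonneg fun _ => norm_nonneg _)
      have : ‖c j‖ = ‖c' j.1‖ := by simp [hc', dif_pos j.2]
      rw [this]
      exact le_ciSup hb' j.1
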